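/- Let G be an abelian torsion group and G0 ⊆ G. The monoid of zero-sum sequences over G0 is half-factorial if and only if every minimal zero-sum sequence A over G0 has cross number k(A) = 1, where k(A) = Σ_{g} v_g(A)/ord(g). -/

import Mathlib

open Multiset

section Defs

variable {G : Type*} [AddCommGroup G]

/-- `S` is a zero-sum sequence over `G0`. -/
def IsZeroSumSeq (G0 : Set G) (S : Multiset G) : Prop :=
  (∀ g ∈ S, g ∈ G0) ∧ S.sum = 0

/-- `S` is a minimal zero-sum sequence over `G0`. -/
def IsMinZeroSum (G0 : Set G) (S : Multiset G) : Prop :=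
  S ≠ 0 ∧ IsZeroSumSeq G0 S ∧
    ∀ T : Multiset G, T ≤ S → T ≠ 0 → T ≠ S → T.sum ≠ 0

/-- The set of lengths of factorizations of `B` into minimal zero-sum sequences over `G0`. -/
def LengthSet (G0 : Set G) (B : Multiset G) : Set ℕ :=
  { k | ∃ F : Multiset (Multiset G), F.card = k ∧ (∀ A ∈ F, IsMinZeroSum G0 A) ∧ F.sum = B }

/-- The set of successive distances of a set of naturals. -/
def DeltaOf (L : Set ℕ) : Set ℕ :=
  { d | ∃ a ∈ L, ∃ b ∈ L, a < b ∧ b - a = d ∧ ∀ c ∈ L, ¬(a < c ∧ c < b) }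

/-- The set of distances of the monoid of zero-sum sequences over `G0`. -/
def DeltaB (G0 : Set G) : Set ℕ :=
  ⋃ B ∈ { B : Multiset G | IsZeroSumSeq G0 B }, DeltaOf (LengthSet G0 B)

/-- Minimal distance, with the convention `min ∅ = 0`. -/
noncomputable def minDelta (G0 : Set G) : ℕ := sInf (DeltaB G0)

/-- Cross number of a sequence. -/
noncomputable def crossNum (S : Multiset G) : ℚ :=
  (S.map fun g => (1 : ℚ) / (addOrderOf g : ℚ)).sum

/-- `G0` is weakly half-factorial. -/
def WeaklyHF (G0 : Set G) : Prop :=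
  ∀ A : Multiset G, IsMinZeroSum G0 A → ∃ m : ℕ, crossNum A = (m : ℚ)

/-- `G0` is half-factorial. -/
def HalfFactorial (G0 : Set G) : Prop :=
  ∀ B : Multiset G, IsZeroSumSeq G0 B →
    ∀ k ∈ LengthSet G0 B, ∀ l ∈ LengthSet G0 B, k = l

end Defs

section Aux

variable {G : Type*} [AddCommGroup G]

lemma crossNum_zero : crossNum (0 : Multiset G) = 0 := by simp [crossNum]

lemma crossNum_add (s t : Multiset G) : crossNum (s + t) = crossNum s + crossNum t := by
  simp [crossNum]

lemma crossNum_sumF (F : Multiset (Multiset G)) :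
    crossNum F.sum = (F.map crossNum).sum := by
  induction F using Multiset.induction with
  | empty => simp [crossNum]
  | cons a s ih => simp [crossNum_add, ih]

/-- `g` repeated `addOrderOf g` times is a minimal zero-sum sequence. -/
lemma minZeroSum_replicate (G0 : Set G) {g : G} (hg : g ∈ G0) (hfin : IsOfFinAddOrder g) :
    IsMinZeroSum G0 (replicate (addOrderOf g) g) := by
  have hpos : 0 < addOrderOf g := hfin.addOrderOf_pos
  refine ⟨?_, ⟨?_, ?_⟩, ?_⟩
  · intro h
    have := congrArg Multiset.card h
    simp at this
    simp_all
  · intro x hx; rw [Multiset.eq_of_mem_replicate hx]; exact hg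
  · rw [Multiset.sum_replicate]; exact addOrderOf_nsmul_eq_zero g
  · intro T hT hT0 hTS
    obtain ⟨k, hk, rfl⟩ := Multiset.le_replicate_iff.mp hT
    rw [Multiset.sum_replicate]
    have hk0 : k ≠ 0 := by
      intro h; subst h; exact hT0 rfl
    have hklt : k < addOrderOf g := lt_of_le_of_ne hk (by
      intro h; exact hTS (by rw [h]))
    intro h0
    have := addOrderOf_le_of_nsmul_eq_zero (Nat.pos_of_ne_zero hk0) h0
    omega

lemma card_finset_sum {α β : Type*} (s : Finset α) (f : α → Multiset β) :
    (∑ a ∈ s, f a).card = ∑ a ∈ s, (f a).card := by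
  classical
  induction s using Finset.induction with
  | empty => simp
  | insert a s h ih => simp [Finset.sum_insert h, ih]

end Aux

/-- For an abelian torsion group `G` and `G0 ⊆ G`, the monoid of
zero-sum sequences over `G0` is half-factorial iff every minimal zero-sum
sequence over `G0` has cross number `1`. -/
theorem stmt_5 {G : Type*} [AddCommGroup G]
    (htor : ∀ g : G, IsOfFinAddOrder g) (G0 : Set G) :
    HalfFactorial G0 ↔
      ∀ A : Multiset G, IsMinZeroSum G0 A → crossNum A = 1 := by
  classical
  constructor
  · -- half-factorial → every minimal has cross number 1
    intro hHF A hA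
    obtain ⟨hA0, ⟨hAG0, hAsum⟩, hAmin⟩ := hA
    set N : ℕ := (A.map addOrderOf).prod with hN
    have hNpos : 0 < N := by
      refine Multiset.prod_pos ?_
      intro n hn
      obtain ⟨g, _, rfl⟩ := Multiset.mem_map.mp hn
      exact (htor g).addOrderOf_pos
    have hdvd : ∀ g ∈ A, addOrderOf g ∣ N :=
      fun g hg => Multiset.dvd_prod (Multiset.mem_map_of_mem _ hg)
    -- the big zero-sum sequence B = N • A
    set B : Multiset G := N • A with hB
    have hBsum : B.sum = 0 := by
      rw [hB, Multiset.sum_nsmul, hAsum, smul_zero]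
    have hBzs : IsZeroSumSeq G0 B := by
      refine ⟨fun g hg => ?_, hBsum⟩
      exact hAG0 g (Multiset.mem_nsmul.mp hg).2
    -- factorization 1: N copies of A
    have hmem1 : N ∈ LengthSet G0 B := by
      refine ⟨replicate N A, by simp, ?_, ?_⟩
      · intro A' hA'
        rw [Multiset.eq_of_mem_replicate hA']
        exact ⟨hA0, ⟨hAG0, hAsum⟩, hAmin⟩
      · rw [Multiset.sum_replicate]
    -- factorization 2: blocks g^(ord g)
    set K : ℕ := ∑ g ∈ A.toFinset, N * A.count g / addOrderOf g with hK
    have hmem2 : K ∈ LengthSet G0 B := by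
      refine ⟨∑ g ∈ A.toFinset, replicate (N * A.count g / addOrderOf g)
        (replicate (addOrderOf g) g), ?_, ?_, ?_⟩
      · rw [card_finset_sum]; simp [hK]
      · intro A' hA'
        rw [Multiset.mem_sum] at hA'
        obtain ⟨g, hg, hA'⟩ := hA'
        rw [Multiset.eq_of_mem_replicate hA']
        exact minZeroSum_replicate G0 (hAG0 g (Multiset.mem_toFinset.mp hg)) (htor g)
      · have : ∀ g ∈ A.toFinset,
            (replicate (N * A.count g / addOrderOf g) (replicate (addOrderOf g) g)).sum
              = (N * A.count g) • ({g} : Multiset G) := by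
          intro g hg
          rw [Multiset.sum_replicate, Multiset.nsmul_replicate,
            Nat.div_mul_cancel ((hdvd g (Multiset.mem_toFinset.mp hg)).mul_right _),
            ← Multiset.nsmul_singleton]
        rw [Multiset.sum_sum, Finset.sum_congr rfl this]
        have htf : (N • A).toFinset = A.toFinset := Multiset.toFinset_nsmul A N hNpos.ne'
        calc ∑ g ∈ A.toFinset, (N * A.count g) • ({g} : Multiset G)
            = ∑ g ∈ (N • A).toFinset, (N • A).count g • ({g} : Multiset G) := by
              rw [htf]; exact Finset.sum_congr rfl fun g _ => by
                rw [Multiset.count_nsmul]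
          _ = N • A := Multiset.toFinset_sum_count_nsmul_eq _
    -- half-factoriality: N = K
    have hNK : N = K := hHF B hBzs N hmem1 K hmem2
    -- compute crossNum A
    have hcross : (N : ℚ) * crossNum A = (K : ℚ) := by
      rw [crossNum, Finset.sum_multiset_map_count, hK, Nat.cast_sum, Finset.mul_sum]
      refine Finset.sum_congr rfl fun g hg => ?_
      have hgord : (addOrderOf g : ℚ) ≠ 0 := by
        exact_mod_cast (htor g).addOrderOf_pos.ne'
      rw [Nat.cast_div ((hdvd g (Multiset.mem_toFinset.mp hg)).mul_right _) hgord]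
      rw [nsmul_eq_mul]
      push_cast
      ring
    have : (N : ℚ) * crossNum A = (N : ℚ) := by rw [hcross, hNK]
    have hN0 : (N : ℚ) ≠ 0 := by exact_mod_cast hNpos.ne'
    exact mul_left_cancel₀ hN0 (this.trans (mul_one (N : ℚ)).symm)
  · -- every minimal has cross number 1 → half-factorial
    intro h1 B _ k hk l hl
    obtain ⟨F, rfl, hFmin, hFsum⟩ := hk
    obtain ⟨F', rfl, hF'min, hF'sum⟩ := hl
    have key : ∀ (F : Multiset (Multiset G)), (∀ A ∈ F, IsMinZeroSum G0 A) →
        crossNum F.sum = (F.card : ℚ) := by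
      intro F hF
      rw [crossNum_sumF]
      rw [Multiset.map_congr rfl fun A hA => h1 A (hF A hA)]
      simp
    have e1 := key F hFmin
    have e2 := key F' hF'min
    rw [hFsum] at e1; rw [hF'sum] at e2
    have : (F.card : ℚ) = (F'.card : ℚ) := by rw [← e1, ← e2]
    exact_mod_cast this
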